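/- In ℂ[[x,y]], with f₀ = x, f₁ = y, f₂ = x + yⁿ for n ≥ 1: dim_ℂ ℂ[[x,y]]/(f₀,f₁) = 1, dim_ℂ ℂ[[x,y]]/(f₁,f₂) = 1, and dim_ℂ ℂ[[x,y]]/(f₀,f₂) = n. -/

import Mathlib

set_option synthInstance.maxHeartbeats 400000

open MvPowerSeries

/-- The formal power series ring `ℂ[[x,y]]`, with `x = X 0` and `y = X 1`. -/
noncomputable abbrev CXY : Type := MvPowerSeries (Fin 2) ℂ

/-- The dimension of `ℂ[[x,y]] / I` as a `ℂ`-vector space, in `ℕ∞`. -/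
noncomputable def dimCXY (I : Ideal CXY) : ℕ∞ :=
  (Module.rank ℂ (CXY ⧸ I)).toENat

noncomputable def phiAux (n : ℕ) : CXY →ₗ[ℂ] (Fin n → ℂ) :=
  LinearMap.pi fun k => MvPowerSeries.coeff (Finsupp.single 1 (k : ℕ))

lemma fin2_eq_single (m : Fin 2 →₀ ℕ) (h : m 0 = 0) : m = Finsupp.single 1 (m 1) := by
  ext i
  fin_cases i <;> simp [h, Finsupp.single_apply]

lemma single_apply_zero (k : ℕ) : (Finsupp.single (1 : Fin 2) k) 0 = 0 :=
  Finsupp.single_eq_of_ne (by decide)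

lemma ker_phiAux (n : ℕ) :
    LinearMap.ker (phiAux n) = (Ideal.span {(X 0 : CXY), X 1 ^ n}).restrictScalars ℂ := by
  ext f
  simp only [LinearMap.mem_ker, Submodule.restrictScalars_mem]
  constructor
  · intro h
    have hcoeff : ∀ k : ℕ, k < n → MvPowerSeries.coeff (Finsupp.single 1 k) f = 0 := by
      intro k hk
      have := congrFun h ⟨k, hk⟩
      simpa [phiAux] using this
    let f1 : CXY := fun m => if m 0 = 0 then 0 else MvPowerSeries.coeff m f
    have key : ∀ m, MvPowerSeries.coeff m f1
        = if m 0 = 0 then 0 else MvPowerSeries.coeff m f := fun m => rfl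
    have hf1 : (X 0 : CXY) ∣ f1 := by
      rw [X_dvd_iff]
      intro m hm
      rw [key]
      simp [hm]
    have hf2 : (X 1 : CXY) ^ n ∣ f - f1 := by
      rw [X_pow_dvd_iff]
      intro m hm
      rw [map_sub, key]
      by_cases h0 : m 0 = 0
      · simp only [if_pos h0, sub_zero]
        rw [fin2_eq_single m h0]
        exact hcoeff (m 1) hm
      · simp only [if_neg h0, coeff_apply, sub_self]
    obtain ⟨g, hg⟩ := hf1
    obtain ⟨h', hh⟩ := hf2
    rw [Ideal.mem_span_pair]
    exact ⟨g, h', by rw [mul_comm g, mul_comm h', ← hg, ← hh]; ring⟩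
  · intro hf
    rw [Ideal.mem_span_pair] at hf
    obtain ⟨a, b, rfl⟩ := hf
    funext k
    have h1 : MvPowerSeries.coeff (Finsupp.single 1 (k : ℕ)) (a * X 0) = 0 :=
      X_dvd_iff.1 (dvd_mul_left _ a) _ (single_apply_zero _)
    have h2 : MvPowerSeries.coeff (Finsupp.single 1 (k : ℕ)) (b * X 1 ^ n) = 0 :=
      X_pow_dvd_iff.1 (dvd_mul_left _ b) _ (by simp [k.isLt])
    simp [phiAux, h1, h2]

lemma surj_phiAux (n : ℕ) : Function.Surjective (phiAux n) := by
  intro v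
  refine ⟨∑ k : Fin n, MvPowerSeries.C (σ := Fin 2) (v k) * X 1 ^ (k : ℕ), ?_⟩
  funext j
  have : (phiAux n) (∑ k : Fin n, MvPowerSeries.C (σ := Fin 2) (v k) * X 1 ^ (k : ℕ)) j
      = ∑ k : Fin n, v k *
        (if Finsupp.single (1 : Fin 2) (j : ℕ) = Finsupp.single 1 (k : ℕ) then (1 : ℂ) else 0) := by
    simp [phiAux, coeff_C_mul, coeff_X_pow]
  rw [this, Finset.sum_eq_single j]
  · simp
  · intro k _ hk
    rw [if_neg, mul_zero]
    intro heq
    exact hk (Fin.val_injective ((Finsupp.single_injective (1 : Fin 2)) heq)).symm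
  · intro h
    exact absurd (Finset.mem_univ j) h

lemma dim_main (n : ℕ) : dimCXY (Ideal.span {(X 0 : CXY), X 1 ^ n}) = (n : ℕ∞) := by
  set I : Ideal CXY := Ideal.span {(X 0 : CXY), X 1 ^ n} with hI
  have e : (CXY ⧸ I) ≃ₗ[ℂ] (Fin n → ℂ) :=
    ((Submodule.Quotient.restrictScalarsEquiv ℂ I).symm.trans
      (Submodule.quotEquivOfEq _ _ (ker_phiAux n).symm)).trans
      ((phiAux n).quotKerEquivOfSurjective (surj_phiAux n))
  rw [dimCXY, e.rank_eq, rank_fun']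
  simp

/-- With `f₀ = x`, `f₁ = y`, `f₂ = x + yⁿ` (`n ≥ 1`) in `ℂ[[x,y]]`:
`dim ℂ[[x,y]]/(f₀,f₁) = 1`, `dim ℂ[[x,y]]/(f₁,f₂) = 1`, `dim ℂ[[x,y]]/(f₀,f₂) = n`. -/
theorem stmt15 (n : ℕ) (hn : 1 ≤ n) :
    dimCXY (Ideal.span {(X 0 : CXY), X 1}) = 1 ∧
    dimCXY (Ideal.span {(X 1 : CXY), X 0 + X 1 ^ n}) = 1 ∧
    dimCXY (Ideal.span {(X 0 : CXY), X 0 + X 1 ^ n}) = (n : ℕ∞) := by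
  have h1 : dimCXY (Ideal.span {(X 0 : CXY), X 1}) = 1 := by
    have := dim_main 1
    simpa using this
  refine ⟨h1, ?_, ?_⟩
  · have hpow : (X 1 : CXY) ^ n = X 1 * X 1 ^ (n - 1) := by
      rw [← pow_succ']
      congr 1
      omega
    have : Ideal.span {(X 1 : CXY), X 0 + X 1 ^ n} = Ideal.span {(X 0 : CXY), X 1} := by
      rw [hpow, Ideal.span_pair_add_left_mul, Ideal.span_pair_comm]
    rw [this]
    exact h1
  · have : Ideal.span {(X 0 : CXY), X 0 + X 1 ^ n} = Ideal.span {(X 0 : CXY), X 1 ^ n} := by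
      have h' : (X 0 : CXY) + X 1 ^ n = X 1 ^ n + X 0 * 1 := by ring
      rw [h', Ideal.span_pair_add_left_mul]
    rw [this]
    exact dim_main n
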